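/- Fix T > 0 and let ψ = (ψ_i)_{i ≥ 1} be a sequence of càdlàg paths ψ_i : [0,T] → ℝ with ψ_i(0) ≤ 1 for every i. If (φ, η) and (φ̃, η̃) are both solutions of the infinite-dimensional Skorokhod problem for ψ associated with the reflection matrix R_∞, then φ_i(t) = φ̃_i(t) and η_i(t) = η̃_i(t) for every i ≥ 1 and t ∈ [0,T]. -/

import Mathlib

open Set Filter MeasureTheory Topology

/-- A path `ψ : [0,T] → ℝ` is càdlàg: right-continuous on `[0,T)` (within the domain `[0,T]`)
and has left limits (within the domain) at every point of `(0,T]`. -/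
def CadlagOn (T : ℝ) (ψ : ℝ → ℝ) : Prop :=
  (∀ t ∈ Ico (0 : ℝ) T, ContinuousWithinAt ψ (Icc t T) t) ∧
  (∀ t ∈ Ioc (0 : ℝ) T, ∃ l : ℝ, Tendsto ψ (nhdsWithin t (Ico 0 t)) (nhds l))

/-- The Lebesgue–Stieltjes measure on `[0,T]` induced by `η` assigns zero mass to the set `A`.
It is encoded via the (unique) Stieltjes function on `ℝ` obtained by extending `η` from `[0,T]`
to `ℝ` constantly to the left of `0` and to the right of `T`. -/
def ZeroMassOn (T : ℝ) (η : ℝ → ℝ) (A : Set ℝ) : Prop :=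
  ∃ f : StieltjesFunction ℝ, (∀ t : ℝ, f t = η (max 0 (min t T))) ∧ f.measure A = 0

/-- `(φ, η)` solves the infinite-dimensional Skorokhod problem on `[0,T]` for `ψ`, associated
with the reflection matrix `R_∞`.  Components are indexed by `ℕ`, where Lean index `i`
corresponds to the paper's coordinate `i + 1` (so `φ 0` is the paper's `φ_1`, etc.), and the
paper's `η_0 ≡ 0` is built into the equation for the first coordinate. -/
def SolvesSPInf (T : ℝ) (ψ φ η : ℕ → ℝ → ℝ) : Prop :=
  (∀ t ∈ Set.Icc (0 : ℝ) T, φ 0 t = ψ 0 t - η 0 t) ∧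
  (∀ i : ℕ, ∀ t ∈ Set.Icc (0 : ℝ) T, φ (i + 1) t = ψ (i + 1) t + η i t - η (i + 1) t) ∧
  (∀ i : ℕ, ∀ t ∈ Set.Icc (0 : ℝ) T, φ i t ≤ 1) ∧
  (∀ i : ℕ, η i 0 = 0 ∧ MonotoneOn (η i) (Set.Icc 0 T) ∧
    (∀ t ∈ Set.Icc (0 : ℝ) T, ContinuousWithinAt (η i) (Set.Icc t T) t) ∧
    ZeroMassOn T (η i) {t ∈ Set.Icc (0 : ℝ) T | φ i t < 1})

/-- Uniqueness of solutions to the infinite-dimensional Skorokhod problem: any two solutions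
for the same input `ψ` agree on `[0,T]` in every coordinate. -/
lemma one_dim_le (T : ℝ) (hT : 0 ≤ T) (ζ φ β φ' β' : ℝ → ℝ)
    (hφ : ∀ t ∈ Icc (0:ℝ) T, φ t = ζ t - β t)
    (hφ' : ∀ t ∈ Icc (0:ℝ) T, φ' t = ζ t - β' t)
    (hle' : ∀ t ∈ Icc (0:ℝ) T, φ' t ≤ 1)
    (hβ0 : β 0 = 0) (hβ'0 : β' 0 = 0)
    (hmono' : MonotoneOn β' (Icc 0 T))
    (hzm : ZeroMassOn T β {t ∈ Icc (0:ℝ) T | φ t < 1}) :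
    ∀ t ∈ Icc (0:ℝ) T, β t ≤ β' t := by
  intro t₀ ht₀
  by_contra hgt
  push_neg at hgt
  obtain ⟨f, hf, hfm⟩ := hzm
  have hfval : ∀ u ∈ Icc (0:ℝ) T, f u = β u := by
    intro u hu
    rw [hf]
    rw [min_eq_left hu.2, max_eq_right hu.1]
  set S : Set ℝ := {u | u ∈ Icc (0:ℝ) t₀ ∧ β u ≤ β' u} with hS
  have h0S : (0:ℝ) ∈ S := ⟨⟨le_refl _, ht₀.1⟩, by rw [hβ0, hβ'0]⟩
  have hSne : S.Nonempty := ⟨0, h0S⟩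
  have hSbdd : BddAbove S := ⟨t₀, fun u hu => hu.1.2⟩
  set s := sSup S with hs
  have hs0 : 0 ≤ s := le_csSup hSbdd h0S
  have hst₀ : s ≤ t₀ := csSup_le hSne fun u hu => hu.1.2
  have hsIcc : s ∈ Icc (0:ℝ) T := ⟨hs0, hst₀.trans ht₀.2⟩
  -- Step A: β s ≤ β' s
  have hA : β s ≤ β' s := by
    by_contra hA
    push_neg at hA
    have hbound : ∀ u ∈ Iio s, f u ≤ β' s := by
      intro u hu
      obtain ⟨v, hvS, huv⟩ := exists_lt_of_lt_csSup hSne hu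
      have hvIcc : v ∈ Icc (0:ℝ) T := ⟨hvS.1.1, hvS.1.2.trans ht₀.2⟩
      calc f u ≤ f v := f.mono huv.le
        _ = β v := hfval v hvIcc
        _ ≤ β' v := hvS.2
        _ ≤ β' s := hmono' hvIcc hsIcc (le_csSup hSbdd hvS)
    have hll : Function.leftLim f s ≤ β' s :=
      le_of_tendsto (f.mono.tendsto_leftLim s)
        (eventually_nhdsWithin_of_forall hbound)
    have hpos : f.measure {s} ≠ 0 := by
      rw [StieltjesFunction.measure_singleton]
      have : 0 < f s - Function.leftLim f s := by
        rw [hfval s hsIcc]; linarith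
      simp only [ne_eq, ENNReal.ofReal_eq_zero, not_le]
      linarith
    apply hpos
    refine measure_mono_null ?_ hfm
    intro x hx
    simp only [mem_singleton_iff] at hx
    subst hx
    refine ⟨hsIcc, ?_⟩
    have h1 := hle' s hsIcc
    rw [hφ s hsIcc]
    rw [hφ' s hsIcc] at h1
    linarith
  -- Step B: s < t₀
  have hB : s < t₀ := lt_of_le_of_ne hst₀ (fun heq => absurd hA (by rw [heq]; exact not_le.2 hgt))
  -- Step C
  have hsub : Ioc s t₀ ⊆ {t ∈ Icc (0:ℝ) T | φ t < 1} := by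
    intro u hu
    have huIcc : u ∈ Icc (0:ℝ) T := ⟨hs0.trans hu.1.le, hu.2.trans ht₀.2⟩
    have huS : u ∉ S := fun h => absurd (le_csSup hSbdd h) (not_le.2 hu.1)
    have : β' u < β u := by
      by_contra hc
      push_neg at hc
      exact huS ⟨⟨hs0.trans hu.1.le, hu.2⟩, hc⟩
    refine ⟨huIcc, ?_⟩
    have h1 := hle' u huIcc
    rw [hφ u huIcc]
    rw [hφ' u huIcc] at h1
    linarith
  have hz : f.measure (Ioc s t₀) = 0 := measure_mono_null hsub hfm
  rw [StieltjesFunction.measure_Ioc, hfval s hsIcc, hfval t₀ ht₀,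
    ENNReal.ofReal_eq_zero] at hz
  have h1 : β' s ≤ β' t₀ := hmono' hsIcc ht₀ hst₀
  linarith
theorem skorokhod_inf_dim_uniqueness (T : ℝ) (hT : 0 < T) (ψ : ℕ → ℝ → ℝ)
    (hcad : ∀ i : ℕ, CadlagOn T (ψ i)) (hψ0 : ∀ i : ℕ, ψ i 0 ≤ 1)
    (φ η φ' η' : ℕ → ℝ → ℝ)
    (h : SolvesSPInf T ψ φ η) (h' : SolvesSPInf T ψ φ' η') :
    ∀ i : ℕ, ∀ t ∈ Set.Icc (0 : ℝ) T, φ i t = φ' i t ∧ η i t = η' i t := by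
  obtain ⟨heq0, heqS, hle, hprop⟩ := h
  obtain ⟨heq0', heqS', hle', hprop'⟩ := h'
  have hη : ∀ i : ℕ, ∀ t ∈ Set.Icc (0 : ℝ) T, η i t = η' i t := by
    intro i
    induction i with
    | zero =>
      intro t ht
      refine le_antisymm ?_ ?_
      · exact one_dim_le T hT.le (ψ 0) (φ 0) (η 0) (φ' 0) (η' 0) heq0 heq0'
          (hle' 0) (hprop 0).1 (hprop' 0).1 (hprop' 0).2.1 (hprop 0).2.2.2 t ht
      · exact one_dim_le T hT.le (ψ 0) (φ' 0) (η' 0) (φ 0) (η 0) heq0' heq0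
          (hle 0) (hprop' 0).1 (hprop 0).1 (hprop 0).2.1 (hprop' 0).2.2.2 t ht
    | succ i ih =>
      have hφeq : ∀ t ∈ Set.Icc (0 : ℝ) T,
          φ (i + 1) t = (fun t => ψ (i + 1) t + η i t) t - η (i + 1) t := by
        intro t ht
        simpa using heqS i t ht
      have hφeq' : ∀ t ∈ Set.Icc (0 : ℝ) T,
          φ' (i + 1) t = (fun t => ψ (i + 1) t + η i t) t - η' (i + 1) t := by
        intro t ht
        have := heqS' i t ht
        rw [← ih t ht] at this
        simpa using this
      intro t ht
      refine le_antisymm ?_ ?_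
      · exact one_dim_le T hT.le _ (φ (i+1)) (η (i+1)) (φ' (i+1)) (η' (i+1))
          hφeq hφeq' (hle' (i+1)) (hprop (i+1)).1 (hprop' (i+1)).1
          (hprop' (i+1)).2.1 (hprop (i+1)).2.2.2 t ht
      · exact one_dim_le T hT.le _ (φ' (i+1)) (η' (i+1)) (φ (i+1)) (η (i+1))
          hφeq' hφeq (hle (i+1)) (hprop' (i+1)).1 (hprop (i+1)).1
          (hprop (i+1)).2.1 (hprop' (i+1)).2.2.2 t ht
  intro i t ht
  refine ⟨?_, hη i t ht⟩
  cases i with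
  | zero => rw [heq0 t ht, heq0' t ht, hη 0 t ht]
  | succ i => rw [heqS i t ht, heqS' i t ht, hη i t ht, hη (i+1) t ht]
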